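/- (Discrete exponential-weight upper bound) Let p > 1. For every h > 1 there exists a sequence a = (a_k)_{k≥0} of nonnegative reals with Σ_k a_k = h and (Σ_k a_k^p)^(1/p) ≤ 1 such that (Σ_k a_k^p e^k)^(1/p) ≤ C · e^{h^{p/(p−1)}/p} / h^{1/(p−1)} for a constant C = C(p) independent of h. -/

import Mathlib

theorem stmt_5 (p : ℝ) (hp : 1 < p) :
    ∃ C > 0, ∀ h : ℝ, 1 < h → ∃ a : ℕ → ℝ,
      (∀ k, 0 ≤ a k) ∧ Summable a ∧ (∑' k, a k) = h ∧ (∑' k, a k ^ p) ≤ 1 ∧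
      Summable (fun k : ℕ => a k ^ p * Real.exp k) ∧
      (∑' k : ℕ, a k ^ p * Real.exp k) ^ (1 / p) ≤
        C * Real.exp (h ^ (p / (p - 1)) / p) / h ^ (1 / (p - 1)) := by
  have hp0 : (0:ℝ) < p := lt_trans one_pos hp
  have hp1 : (0:ℝ) < p - 1 := by linarith
  refine ⟨Real.exp 1, Real.exp_pos 1, fun h hh => ?_⟩
  have hh0 : (0:ℝ) < h := lt_trans one_pos hh
  set x : ℝ := h ^ (p / (p - 1)) with hxdef
  have hexp1 : (1:ℝ) < p / (p - 1) := by
    rw [lt_div_iff₀ hp1]; linarith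
  have hx1 : 1 < x := by
    exact (Real.one_lt_rpow_iff_of_pos hh0).2 (Or.inl ⟨hh, by linarith⟩)
  set N : ℕ := ⌈x⌉₊ with hNdef
  have hxN : x ≤ (N : ℝ) := Nat.le_ceil x
  have hN0 : (0:ℝ) < N := lt_of_lt_of_le (lt_trans one_pos hx1) hxN
  have hNx : (N : ℝ) < x + 1 := Nat.ceil_lt_add_one (by linarith)
  set c : ℝ := h / N with hcdef
  have hc0 : 0 ≤ c := by positivity
  set a : ℕ → ℝ := fun k => if k < N then c else 0 with ha
  have hzero : ∀ k ∉ Finset.range N, a k = 0 := by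
    intro k hk
    simp only [Finset.mem_range, not_lt] at hk
    simp [ha, Nat.not_lt.mpr hk]
  have hzerop : ∀ k ∉ Finset.range N, a k ^ p = 0 := by
    intro k hk
    rw [hzero k hk, Real.zero_rpow (ne_of_gt hp0)]
  have hzerope : ∀ k ∉ Finset.range N, a k ^ p * Real.exp k = 0 := by
    intro k hk
    rw [hzerop k hk, zero_mul]
  have hsummable : Summable a := summable_of_ne_finset_zero hzero
  have hsummable2 : Summable (fun k : ℕ => a k ^ p * Real.exp k) :=
    summable_of_ne_finset_zero hzerope
  -- x^{p-1} = h^p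
  have hxp : x ^ (p - 1) = h ^ p := by
    rw [hxdef, ← Real.rpow_mul (le_of_lt hh0)]
    congr 1
    field_simp
  -- N^p = N * N^{p-1}
  have hNp : (N:ℝ) ^ p = (N:ℝ) * (N:ℝ) ^ (p - 1) := by
    have := Real.rpow_add hN0 1 (p - 1)
    rw [Real.rpow_one] at this
    rw [← this]; congr 1; ring
  have hhpN : h ^ p ≤ (N:ℝ) ^ (p - 1) := by
    rw [← hxp]
    exact Real.rpow_le_rpow (by linarith) hxN (le_of_lt hp1)
  -- sum of a = h
  have hsum_a : (∑' k, a k) = h := by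
    rw [tsum_eq_sum hzero]
    rw [Finset.sum_congr rfl (fun k hk => by
      simp only [Finset.mem_range] at hk; simp [ha, hk] : ∀ k ∈ Finset.range N, a k = c),
      Finset.sum_const, Finset.card_range, nsmul_eq_mul, hcdef]
    field_simp
  -- sum of a^p = N * c^p
  have hsum_ap_eq : (∑' k, a k ^ p) = N * c ^ p := by
    rw [tsum_eq_sum hzerop]
    rw [Finset.sum_congr rfl (fun k hk => by
      simp only [Finset.mem_range] at hk; simp [ha, hk] : ∀ k ∈ Finset.range N, a k ^ p = c ^ p),
      Finset.sum_const, Finset.card_range, nsmul_eq_mul]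
  have hsum_ap : (∑' k, a k ^ p) ≤ 1 := by
    rw [hsum_ap_eq, hcdef, Real.div_rpow (le_of_lt hh0) (le_of_lt hN0)]
    have hNpp : (0:ℝ) < (N:ℝ) ^ p := Real.rpow_pos_of_pos hN0 p
    rw [← mul_div_assoc, div_le_one hNpp, hNp]
    exact mul_le_mul_of_nonneg_left hhpN (le_of_lt hN0)
  -- geometric sum bound
  have hgeo : ∑ k ∈ Finset.range N, Real.exp (k : ℕ) ≤ Real.exp N := by
    have he1 : (1:ℝ) < Real.exp 1 := by
      have := Real.add_one_le_exp (1:ℝ); linarith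
    calc ∑ k ∈ Finset.range N, Real.exp (k : ℕ)
        = ∑ k ∈ Finset.range N, Real.exp 1 ^ k := by
          simp [Real.exp_one_pow]
      _ = (Real.exp 1 ^ N - 1) / (Real.exp 1 - 1) := geom_sum_eq (ne_of_gt he1) N
      _ ≤ Real.exp 1 ^ N - 1 := by
          apply div_le_self
          · have : (1:ℝ) ≤ Real.exp 1 ^ N := by
              rw [Real.exp_one_pow]; exact Real.one_le_exp (by positivity)
            linarith
          · have := Real.add_one_le_exp (1:ℝ); linarith
      _ ≤ Real.exp 1 ^ N := by linarith
      _ = Real.exp N := Real.exp_one_pow N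
  have hS_eq : (∑' k : ℕ, a k ^ p * Real.exp k) =
      c ^ p * ∑ k ∈ Finset.range N, Real.exp (k : ℕ) := by
    rw [tsum_eq_sum hzerope]
    rw [Finset.sum_congr rfl (fun k hk => by
      simp only [Finset.mem_range] at hk; simp [ha, hk] :
      ∀ k ∈ Finset.range N, a k ^ p * Real.exp k = c ^ p * Real.exp k),
      ← Finset.mul_sum]
  have hS_le : (∑' k : ℕ, a k ^ p * Real.exp k) ≤ c ^ p * Real.exp N := by
    rw [hS_eq]
    exact mul_le_mul_of_nonneg_left hgeo (Real.rpow_nonneg hc0 p)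
  have hS_nonneg : 0 ≤ (∑' k : ℕ, a k ^ p * Real.exp k) := by
    rw [hS_eq]
    positivity
  -- the main estimate
  have hmain : (∑' k : ℕ, a k ^ p * Real.exp k) ^ (1/p) ≤ c * Real.exp ((N:ℝ)/p) := by
    calc (∑' k : ℕ, a k ^ p * Real.exp k) ^ (1/p)
        ≤ (c ^ p * Real.exp N) ^ (1/p) :=
          Real.rpow_le_rpow hS_nonneg hS_le (by positivity)
      _ = (c ^ p) ^ (1/p) * (Real.exp N) ^ ((1:ℝ)/p) :=
          Real.mul_rpow (Real.rpow_nonneg hc0 p) (le_of_lt (Real.exp_pos _))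
      _ = c * Real.exp ((N:ℝ)/p) := by
          rw [← Real.rpow_mul hc0, mul_one_div, div_self (ne_of_gt hp0), Real.rpow_one,
            ← Real.exp_mul, mul_one_div]
  -- c ≤ 1 / h^{1/(p-1)}
  have hx_split : x = h * h ^ ((1:ℝ)/(p-1)) := by
    rw [hxdef, show p / (p-1) = 1 + 1/(p-1) by field_simp; ring, Real.rpow_add hh0, Real.rpow_one]
  have hhpow_pos : (0:ℝ) < h ^ ((1:ℝ)/(p-1)) := Real.rpow_pos_of_pos hh0 _
  have hc_le : c ≤ 1 / h ^ ((1:ℝ)/(p-1)) := by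
    rw [hcdef]
    rw [div_le_div_iff₀ hN0 hhpow_pos]
    calc h * h ^ ((1:ℝ)/(p-1)) = x := hx_split.symm
      _ ≤ N := hxN
      _ = 1 * N := (one_mul _).symm
  -- exp(N/p) ≤ exp 1 * exp(x/p)
  have hE_le : Real.exp ((N:ℝ)/p) ≤ Real.exp 1 * Real.exp (x/p) := by
    rw [← Real.exp_add]
    apply Real.exp_le_exp.2
    rw [div_le_iff₀ hp0, add_mul, one_mul, div_mul_cancel₀ _ (ne_of_gt hp0)]
    linarith
  refine ⟨a, ?_, hsummable, hsum_a, hsum_ap, hsummable2, ?_⟩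
  · intro k
    by_cases hk : k < N <;> simp [ha, hk, hc0]
  calc (∑' k : ℕ, a k ^ p * Real.exp k) ^ (1/p)
      ≤ c * Real.exp ((N:ℝ)/p) := hmain
    _ ≤ (1 / h ^ ((1:ℝ)/(p-1))) * (Real.exp 1 * Real.exp (x/p)) := by
        apply mul_le_mul hc_le hE_le (le_of_lt (Real.exp_pos _)) (by positivity)
    _ = Real.exp 1 * Real.exp (x/p) / h ^ ((1:ℝ)/(p-1)) := by ring
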